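/- arXiv:2501.11600 — 3 statements merged into one kernel-verified Lean document; each statement's English description precedes it below -/
import Mathlib

section
/- Let $(p_n)_{n\in\mathbb{Z}}$ be a sequence of exponents with $1 \le p_n$ and $\bar{p} := \sup_n p_n < \infty$. Then for every sequence $b = (b_n) \in \ell^{p_n}(\mathbb{Z})$ (the variable discrete Lebesgue space) and every $n \in \mathbb{Z}$, the series $\sum_{m \neq n} b_m/(n-m)$ converges absolutely; in fact $\sum_{m \neq n} |b_m|/|n-m| \le \frac{4 \cdot 2^{-2/\bar{p}}}{1 - 2^{-1/\bar{p}}} \|b\|_{\ell^{\bar{p}}(\mathbb{Z})}$. -/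
/-- Membership in the variable discrete Lebesgue space `ℓ^{p_n}(ℤ)`:
some positive `λ` makes the modular of `b/λ` summable and at most 1. -/
def MemVarLp (p : ℤ → ℝ) (b : ℤ → ℝ) : Prop :=
  ∃ lam : ℝ, 0 < lam ∧ Summable (fun n => |b n / lam| ^ p n) ∧
    ∑' n, |b n / lam| ^ p n ≤ 1

open Real

private lemma bern_aux {x q : ℝ} (hx : 1 ≤ x) (hq : 1 < q) :
    (q - 1) * (x + 1) ^ (-q) + (x + 1) ^ (1 - q) ≤ x ^ (1 - q) := by
  have hx0 : (0:ℝ) < x := lt_of_lt_of_le one_pos hx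
  have hx1 : (0:ℝ) < x + 1 := by linarith
  have hxq : (0:ℝ) < x ^ q := rpow_pos_of_pos hx0 q
  have hx1q : (0:ℝ) < (x + 1) ^ q := rpow_pos_of_pos hx1 q
  have hB : 1 + q * (1 / x) ≤ (1 + 1 / x) ^ q :=
    one_add_mul_self_le_rpow_one_add (le_trans (by norm_num : (-1:ℝ) ≤ 0) (by positivity)) hq.le
  have key : (x + q) * x ^ q ≤ x * (x + 1) ^ q := by
    have h2 : x ^ q * (1 + q * (1 / x)) ≤ (x + 1) ^ q := by
      rw [show x + 1 = x * (1 + 1 / x) by field_simp, mul_rpow hx0.le (by positivity)]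
      exact mul_le_mul_of_nonneg_left hB hxq.le
    have h3 : (x + q) * x ^ q = x * (x ^ q * (1 + q * (1 / x))) := by
      field_simp
    rw [h3]
    exact mul_le_mul_of_nonneg_left h2 hx0.le
  calc (q - 1) * (x + 1) ^ (-q) + (x + 1) ^ (1 - q)
      = (x + q) / (x + 1) ^ q := by
        rw [rpow_sub hx1, rpow_one, rpow_neg hx1.le]
        field_simp; ring
    _ ≤ x / x ^ q := (div_le_div_iff₀ hx1q hxq).2 (by linarith)
    _ = x ^ (1 - q) := by rw [rpow_sub hx0, rpow_one]

private lemma psum_le {q : ℝ} (hq : 1 < q) (N : ℕ) :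
    ∑ j ∈ Finset.range N, ((j : ℝ) + 1) ^ (-q) ≤ 1 + 1 / (q - 1) := by
  have hq0 : (0:ℝ) < q - 1 := by linarith
  have main : ∀ N : ℕ, ∑ j ∈ Finset.range (N + 1), ((j : ℝ) + 1) ^ (-q)
      ≤ 1 + (1 - ((N : ℝ) + 1) ^ (1 - q)) / (q - 1) := by
    intro N
    induction N with
    | zero => simp [Real.one_rpow]
    | succ N ih =>
      rw [Finset.sum_range_succ]
      have hb := bern_aux (x := (N : ℝ) + 1) (by simp [Nat.cast_nonneg] : (1:ℝ) ≤ (N:ℝ)+1) hq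
      have hcast : ((N : ℝ) + 1) + 1 = ((N + 1 : ℕ) : ℝ) + 1 := by push_cast; ring
      rw [hcast] at hb
      have h2 : (((N + 1 : ℕ) : ℝ) + 1) ^ (-q)
          ≤ (((N : ℝ) + 1) ^ (1 - q) - (((N + 1 : ℕ) : ℝ) + 1) ^ (1 - q)) / (q - 1) := by
        rw [le_div_iff₀ hq0]; linarith
      refine le_trans (add_le_add ih h2) (le_of_eq ?_)
      field_simp
      ring
  rcases N with _ | N
  · simp
    positivity
  · refine le_trans (main N) ?_
    have h3 : (0:ℝ) ≤ ((N : ℝ) + 1) ^ (1 - q) := rpow_nonneg (by positivity) _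
    have : (1 - ((N : ℝ) + 1) ^ (1 - q)) / (q - 1) ≤ 1 / (q - 1) := by
      gcongr
      linarith
    linarith


private lemma memVarLp_summable {p : ℤ → ℝ} {pbar : ℝ} (hp1 : ∀ n, 1 ≤ p n)
    (hpbar : ∀ n, p n ≤ pbar) {b : ℤ → ℝ} (hb : MemVarLp p b) :
    Summable (fun m => |b m| ^ pbar) := by
  obtain ⟨lam, hlam, hsum, hle⟩ := hb
  have hpbar1 : 1 ≤ pbar := le_trans (hp1 0) (hpbar 0)
  have key : ∀ m, |b m / lam| ^ pbar ≤ |b m / lam| ^ p m := by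
    intro m
    rcases eq_or_lt_of_le (abs_nonneg (b m / lam)) with h | h
    · rw [← h, Real.zero_rpow (by linarith), Real.zero_rpow (by linarith [hp1 m])]
    · refine Real.rpow_le_rpow_of_exponent_ge h ?_ (hpbar m)
      by_contra hgt
      push_neg at hgt
      have h1 : (1:ℝ) < |b m / lam| ^ p m := by
        calc (1:ℝ) = 1 ^ p m := (Real.one_rpow _).symm
        _ < |b m / lam| ^ p m := Real.rpow_lt_rpow (by norm_num) hgt (by linarith [hp1 m])
      have h2 : |b m / lam| ^ p m ≤ 1 :=
        le_trans (Summable.le_tsum hsum m fun j _ => Real.rpow_nonneg (abs_nonneg _) _) hle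
      linarith
  have hs1 : Summable (fun m => |b m / lam| ^ pbar) :=
    Summable.of_nonneg_of_le (fun m => Real.rpow_nonneg (abs_nonneg _) _) key hsum
  have hne : lam ^ pbar ≠ 0 := (Real.rpow_pos_of_pos hlam _).ne'
  refine (hs1.mul_left (lam ^ pbar)).congr fun m => ?_
  rw [abs_div, abs_of_pos hlam, Real.div_rpow (abs_nonneg _) hlam.le, mul_comm,
    div_mul_cancel₀ _ hne]

private lemma hasSum_weight {q : ℝ} (hq : 1 < q) (n : ℤ) :
    ∃ T : ℝ, HasSum (fun m : ℤ => (if m = n then 0 else |(n : ℝ) - m|⁻¹) ^ q) T ∧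
      T ≤ 2 * (1 + 1 / (q - 1)) := by
  have hq0 : (0:ℝ) < q := by linarith
  set v : ℕ → ℝ := fun j => ((j : ℝ) + 1) ^ (-q) with hv_def
  have hv_nonneg : ∀ j, 0 ≤ v j := fun j => Real.rpow_nonneg (by positivity) _
  have hv_sum : Summable v := summable_of_sum_range_le hv_nonneg (psum_le hq)
  set V : ℝ := ∑' j, v j with hV_def
  have hV : HasSum v V := hv_sum.hasSum
  have hV_le : V ≤ 1 + 1 / (q - 1) := Real.tsum_le_of_sum_range_le hv_nonneg (psum_le hq)
  set w : ℤ → ℝ := fun k => (if k = 0 then 0 else |(k : ℝ)|⁻¹) ^ q with hw_def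
  -- w on the positives
  have hpos : HasSum (fun j : ℕ => w (j : ℤ)) V := by
    have e1 : ∀ j : ℕ, w (((j + 1 : ℕ) : ℤ)) = v j := by
      intro j
      simp only [hw_def]
      rw [if_neg (by exact_mod_cast Nat.succ_ne_zero j)]
      have : |(((j + 1 : ℕ) : ℤ) : ℝ)| = (j : ℝ) + 1 := by
        push_cast
        rw [abs_of_nonneg (by positivity)]
      rw [this, Real.inv_rpow (by positivity), ← Real.rpow_neg (by positivity)]
    have h1 : HasSum (fun j : ℕ => w (((j + 1 : ℕ) : ℤ))) V := by
      rw [show (fun j : ℕ => w (((j + 1 : ℕ) : ℤ))) = v from funext e1]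
      exact hV
    have h2 := (hasSum_nat_add_iff (f := fun j : ℕ => w (j : ℤ)) 1).mp h1
    simpa [hw_def, Real.zero_rpow hq0.ne'] using h2
  have hneg : HasSum (fun j : ℕ => w (-((j : ℤ) + 1))) V := by
    have e1 : ∀ j : ℕ, w (-((j : ℤ) + 1)) = v j := by
      intro j
      simp only [hw_def]
      rw [if_neg (by omega)]
      have : |((-((j : ℤ) + 1) : ℤ) : ℝ)| = (j : ℝ) + 1 := by
        push_cast
        rw [abs_neg, abs_of_nonneg (by positivity)]
      rw [this, Real.inv_rpow (by positivity), ← Real.rpow_neg (by positivity)]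
    rw [show (fun j : ℕ => w (-((j : ℤ) + 1))) = v from funext e1]
    exact hV
  have hw : HasSum w (V + V) := HasSum.of_nat_of_neg_add_one hpos hneg
  refine ⟨V + V, ?_, by linarith⟩
  refine (Equiv.addRight n).hasSum_iff.mp ?_
  refine HasSum.congr_fun hw fun k => ?_
  simp only [hw_def, Function.comp_apply, Equiv.coe_addRight]
  by_cases hk : k = 0
  · rw [if_pos hk, if_pos (by omega)]
  · rw [if_neg hk, if_neg (by omega)]
    congr 2
    push_cast
    rw [← abs_neg]
    ring_nf

theorem discrete_hilbert_well_defined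
    (p : ℤ → ℝ) (pbar : ℝ) (hp1 : ∀ n, 1 ≤ p n) (hpbar : ∀ n, p n ≤ pbar)
    (b : ℤ → ℝ) (hb : MemVarLp p b) (n : ℤ) :
    Summable (fun m : ℤ => if m = n then 0 else |b m| / |(n : ℝ) - m|) ∧
    (∑' m : ℤ, if m = n then 0 else |b m| / |(n : ℝ) - m|) ≤
      4 * 2 ^ (-(2 : ℝ) / pbar) / (1 - 2 ^ (-(1 : ℝ) / pbar)) *
        (∑' m : ℤ, |b m| ^ pbar) ^ (1 / pbar) := by
  have hpbar1 : 1 ≤ pbar := le_trans (hp1 0) (hpbar 0)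
  have h0 : (0:ℝ) < pbar := by linarith
  have hS : Summable (fun m => |b m| ^ pbar) := memVarLp_summable hp1 hpbar hb
  have hSnn : 0 ≤ ∑' m : ℤ, |b m| ^ pbar :=
    tsum_nonneg fun m => Real.rpow_nonneg (abs_nonneg _) _
  rcases eq_or_lt_of_le hpbar1 with heq | hlt
  · -- case pbar = 1
    subst heq
    have hle : ∀ m : ℤ, (if m = n then 0 else |b m| / |(n:ℝ) - m|) ≤ |b m| ^ (1:ℝ) := by
      intro m
      rw [Real.rpow_one]
      split_ifs with h
      · exact abs_nonneg _
      · apply div_le_self (abs_nonneg _)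
        have h1 : (1:ℤ) ≤ |n - m| := Int.one_le_abs (sub_ne_zero.mpr fun hnm => h hnm.symm)
        calc (1:ℝ) ≤ |((n - m : ℤ) : ℝ)| := by rw [← Int.cast_abs]; exact_mod_cast h1
        _ = |(n:ℝ) - m| := by push_cast; ring_nf
    have hnn : ∀ m : ℤ, 0 ≤ (if m = n then 0 else |b m| / |(n:ℝ) - m|) := by
      intro m; split_ifs
      · exact le_refl 0
      · positivity
    have hsum : Summable (fun m : ℤ => if m = n then 0 else |b m| / |(n:ℝ) - m|) :=
      Summable.of_nonneg_of_le hnn hle hS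
    refine ⟨hsum, ?_⟩
    have c2 : (2:ℝ) ^ (-(2:ℝ)/1) = 1/4 := by
      rw [show (-(2:ℝ)/1) = ((-2 : ℤ) : ℝ) by norm_num, Real.rpow_intCast]; norm_num
    have c1 : (2:ℝ) ^ (-(1:ℝ)/1) = 1/2 := by
      rw [show (-(1:ℝ)/1) = ((-1 : ℤ) : ℝ) by norm_num, Real.rpow_intCast]; norm_num
    have hts := Summable.tsum_le_tsum hle hsum hS
    rw [c2, c1]
    simp only [one_div_one, Real.rpow_one]
    simp only [Real.rpow_one] at hts hSnn
    norm_num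
    linarith
  · -- case 1 < pbar
    set q : ℝ := pbar / (pbar - 1) with hq_eq
    have hps : 0 < pbar - 1 := by linarith
    have hpq : pbar.HolderConjugate q := by
      rw [hq_eq]; exact Real.HolderConjugate.conjExponent hlt
    have hq1 : 1 < q := hpq.symm.lt
    have hq0 : 0 < q := by linarith
    obtain ⟨T, hT, hT_le⟩ := hasSum_weight hq1 n
    have hq_sub : q - 1 = 1 / (pbar - 1) := by
      rw [hq_eq]; field_simp; ring
    have hqsub : 1 + 1 / (q - 1) = pbar := by
      rw [hq_sub, one_div_one_div]; ring
    rw [hqsub] at hT_le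
    have hgnn : ∀ m : ℤ, (0:ℝ) ≤ (fun m : ℤ => if m = n then 0 else |(n:ℝ) - m|⁻¹) m := by
      intro m; dsimp only; split_ifs
      · exact le_refl 0
      · positivity
    have hH := Real.summable_and_inner_le_Lp_mul_Lq_tsum_of_nonneg (f := fun m : ℤ => |b m|)
      (g := fun m : ℤ => if m = n then 0 else |(n:ℝ) - m|⁻¹) hpq
      (fun m => abs_nonneg _) hgnn hS hT.summable
    have hfg : (fun m : ℤ => |b m| * (if m = n then 0 else |(n:ℝ) - m|⁻¹))
        = fun m : ℤ => if m = n then 0 else |b m| / |(n:ℝ) - m| := by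
      funext m
      split_ifs
      · ring
      · rw [div_eq_mul_inv]
    rw [hfg] at hH
    obtain ⟨hsum, hbound⟩ := hH
    refine ⟨hsum, le_trans hbound ?_⟩
    rw [hT.tsum_eq]
    -- remaining: S^(1/pbar) * T^(1/q) ≤ C * S^(1/pbar)
    have hT0 : 0 ≤ T := hT.nonneg fun m => Real.rpow_nonneg (hgnn m) _
    have hD : 0 < 1 - (2:ℝ) ^ (-(1:ℝ)/pbar) := by
      have : (2:ℝ) ^ (-(1:ℝ)/pbar) < 1 :=
        Real.rpow_lt_one_of_one_lt_of_neg one_lt_two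
          (div_neg_of_neg_of_pos (by norm_num) h0)
      linarith
    have hpD : pbar * (1 - (2:ℝ) ^ (-(1:ℝ)/pbar)) ≤ 1 := by
      have hexp : 1 + Real.log 2 * (-(1:ℝ)/pbar) ≤ (2:ℝ) ^ (-(1:ℝ)/pbar) := by
        rw [Real.rpow_def_of_pos (by norm_num : (0:ℝ) < 2)]
        have := Real.add_one_le_exp (Real.log 2 * (-(1:ℝ)/pbar))
        linarith
      have hlog : Real.log 2 ≤ 1 := by
        have := Real.log_le_sub_one_of_pos (by norm_num : (0:ℝ) < 2); linarith
      have heq2 : Real.log 2 * (-(1:ℝ)/pbar) = -(Real.log 2 / pbar) := by ring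
      have h5 : 1 - (2:ℝ) ^ (-(1:ℝ)/pbar) ≤ Real.log 2 / pbar := by
        rw [heq2] at hexp; linarith
      calc pbar * (1 - (2:ℝ) ^ (-(1:ℝ)/pbar)) ≤ pbar * (Real.log 2 / pbar) :=
            mul_le_mul_of_nonneg_left h5 h0.le
        _ = Real.log 2 := by field_simp
        _ ≤ 1 := hlog
    have hp_le : pbar ≤ 1 / (1 - (2:ℝ) ^ (-(1:ℝ)/pbar)) := by
      rw [le_div_iff₀ hD]; exact hpD
    have e1 : (2:ℝ) ^ ((2:ℝ)/q) = 4 * (2:ℝ) ^ (-(2:ℝ)/pbar) := by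
      have e0 : (2:ℝ)/q = 2 + (-(2:ℝ)/pbar) := by
        rw [hq_eq]; field_simp; ring
      rw [e0, Real.rpow_add (by norm_num : (0:ℝ) < 2)]
      congr 1
      calc (2:ℝ) ^ (2:ℝ) = (2:ℝ) ^ ((2:ℕ):ℝ) := by norm_num
        _ = (2:ℝ) ^ (2:ℕ) := Real.rpow_natCast 2 2
        _ = 4 := by norm_num
    have hC : T ^ (1/q) ≤ 4 * (2:ℝ) ^ (-(2:ℝ)/pbar) / (1 - (2:ℝ) ^ (-(1:ℝ)/pbar)) := by
      have step1 : T ^ (1/q) ≤ (2 * pbar) ^ (1/q) :=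
        Real.rpow_le_rpow hT0 hT_le (by positivity)
      have step2 : (2 * pbar) ^ ((1:ℝ)/q) = (2:ℝ) ^ ((1:ℝ)/q) * pbar ^ ((1:ℝ)/q) :=
        Real.mul_rpow (by norm_num) h0.le
      have step3 : pbar ^ ((1:ℝ)/q) ≤ pbar := by
        calc pbar ^ ((1:ℝ)/q) ≤ pbar ^ (1:ℝ) :=
              Real.rpow_le_rpow_of_exponent_le hpbar1 (by rw [div_le_one hq0]; linarith)
          _ = pbar := Real.rpow_one pbar
      have step5 : (2:ℝ) ^ ((1:ℝ)/q) ≤ (2:ℝ) ^ ((2:ℝ)/q) :=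
        Real.rpow_le_rpow_of_exponent_le one_le_two (by gcongr <;> norm_num)
      have h2q : (0:ℝ) ≤ (2:ℝ) ^ ((1:ℝ)/q) := Real.rpow_nonneg (by norm_num) _
      calc T ^ (1/q) ≤ (2:ℝ) ^ ((1:ℝ)/q) * pbar ^ ((1:ℝ)/q) := by rw [← step2]; exact step1
        _ ≤ (2:ℝ) ^ ((1:ℝ)/q) * pbar := mul_le_mul_of_nonneg_left step3 h2q
        _ ≤ (2:ℝ) ^ ((1:ℝ)/q) * (1 / (1 - (2:ℝ) ^ (-(1:ℝ)/pbar))) :=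
            mul_le_mul_of_nonneg_left hp_le h2q
        _ ≤ (2:ℝ) ^ ((2:ℝ)/q) * (1 / (1 - (2:ℝ) ^ (-(1:ℝ)/pbar))) :=
            mul_le_mul_of_nonneg_right step5 (by positivity)
        _ = 4 * (2:ℝ) ^ (-(2:ℝ)/pbar) / (1 - (2:ℝ) ^ (-(1:ℝ)/pbar)) := by
            rw [e1]; ring
    have hS' : 0 ≤ (∑' m : ℤ, |b m| ^ pbar) ^ ((1:ℝ)/pbar) := Real.rpow_nonneg hSnn _
    calc (∑' m : ℤ, |b m| ^ pbar) ^ ((1:ℝ)/pbar) * T ^ (1/q)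
        ≤ (∑' m : ℤ, |b m| ^ pbar) ^ ((1:ℝ)/pbar) *
          (4 * (2:ℝ) ^ (-(2:ℝ)/pbar) / (1 - (2:ℝ) ^ (-(1:ℝ)/pbar))) :=
          mul_le_mul_of_nonneg_left hC hS'
      _ = 4 * 2 ^ (-(2:ℝ)/pbar) / (1 - 2 ^ (-(1:ℝ)/pbar)) *
          (∑' m : ℤ, |b m| ^ pbar) ^ (1/pbar) := by ring
end

section
/- Let $(p_m)_{m\in\mathbb{Z}}$ satisfy $1 \le p_m \le \bar{p} < \infty$ and let $(b_m)$ satisfy $\sum_m |b_m|^{p_m} \le 1$ (so in particular $|b_m| \le 1$ for all $m$). Then for every $n \in \mathbb{Z}$, $\left( \sum_{m \neq n} \frac{|b_m|}{|n-m|^2} \right)^{p_n} \le C \sum_{m \neq n} \frac{|b_m|^{p_m}}{|n-m|^2}$ raised to the power $\underline{p}/\bar{p}$, where $\underline{p} = \inf_m p_m \ge 1$ and $C$ depends only on $\bar{p}$. Concretely: $\left( \sum_{m \neq n} \frac{|b_m|}{|n-m|^2} \right)^{p_n} \le 4^{\bar{p}} \left( \sum_{m \neq n} \frac{|b_m|^{p_m}}{|n-m|^2}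 \right)^{\underline{p}/\bar{p}}$. -/
open Real

private lemma hasSum_int_inv_sq' : HasSum (fun k : ℤ => 1 / (k:ℝ)^2) (π^2/6 + π^2/6) := by
  have h1 : HasSum (fun n : ℕ => 1/(n:ℝ)^2) (π^2/6) := hasSum_zeta_two
  have h2 : HasSum (fun n : ℕ => 1 / (((-(n+1) : ℤ)):ℝ)^2) (π^2/6) := by
    have h3 : HasSum (fun n : ℕ => 1/((n:ℝ)+1)^2) (π^2/6) := by
      have := (hasSum_nat_add_iff (f := fun n : ℕ => 1/(n:ℝ)^2) 1).mpr (by simpa using h1)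
      simpa using this
    refine h3.congr_fun fun n => ?_
    push_cast
    ring_nf
  exact HasSum.of_nat_of_neg_add_one (h1.congr_fun fun n => by push_cast; ring_nf) h2

theorem holder_step_estimate
    (p : ℤ → ℝ) (pmin pbar : ℝ)
    (hp1 : ∀ m, 1 ≤ p m) (hpbar : ∀ m, p m ≤ pbar) (hpmin : ∀ m, pmin ≤ p m)
    (hpmin1 : 1 ≤ pmin)
    (b : ℤ → ℝ) (hbsum : Summable fun m => |b m| ^ p m)
    (hbmod : ∑' m, |b m| ^ p m ≤ 1)
    (n : ℤ) :
    (∑' m : ℤ, if m = n then 0 else |b m| / |(n : ℝ) - m| ^ 2) ^ p n ≤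
      4 ^ pbar *
        (∑' m : ℤ, if m = n then 0 else |b m| ^ p m / |(n : ℝ) - m| ^ 2) ^
          (pmin / pbar) := by
  have hpbar1 : 1 ≤ pbar := le_trans (hp1 0) (hpbar 0)
  have hpbar0 : 0 < pbar := lt_of_lt_of_le zero_lt_one hpbar1
  set A : ℤ → ℝ := fun m => if m = n then 0 else |b m| / |(n : ℝ) - m| ^ 2 with hA
  set B : ℤ → ℝ := fun m => if m = n then 0 else |b m| ^ p m / |(n : ℝ) - m| ^ 2 with hB
  set W : ℤ → ℝ := fun m => if m = n then 0 else 1 / |(n : ℝ) - m| ^ 2 with hW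
  -- distance lower bound
  have hd1 : ∀ m : ℤ, m ≠ n → (1:ℝ) ≤ |(n : ℝ) - m| ^ 2 := by
    intro m hm
    have h1 : (1:ℝ) ≤ |(n : ℝ) - m| := by
      have : ((n - m : ℤ) : ℝ) = (n : ℝ) - m := by push_cast; ring
      rw [← this, ← Int.cast_abs]
      exact_mod_cast Int.one_le_abs (sub_ne_zero.mpr (fun h => hm h.symm))
    nlinarith
  have hd0 : ∀ m : ℤ, m ≠ n → (0:ℝ) < |(n : ℝ) - m| ^ 2 := fun m hm =>
    lt_of_lt_of_le zero_lt_one (hd1 m hm)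
  -- nonnegativity
  have hA0 : ∀ m, 0 ≤ A m := by
    intro m; by_cases h : m = n <;> simp [hA, h] <;> positivity
  have hB0 : ∀ m, 0 ≤ B m := by
    intro m; by_cases h : m = n <;> simp [hB, h]
    exact div_nonneg (rpow_nonneg (abs_nonneg _) _) (by positivity)
  have hW0 : ∀ m, 0 ≤ W m := by
    intro m; by_cases h : m = n <;> simp [hW, h]; positivity
  -- W as a clean function
  have hWeq : ∀ m, W m = 1 / ((n : ℝ) - m) ^ 2 := by
    intro m
    by_cases h : m = n <;> simp [hW, h, sq_abs]
  -- sum of W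
  have hWsum : HasSum W (π^2/6 + π^2/6) := by
    have he : (fun k : ℤ => W ((Equiv.subLeft n) k)) = fun k : ℤ => 1 / (k:ℝ)^2 := by
      funext k
      rw [hWeq]
      simp only [Equiv.subLeft_apply]
      push_cast
      ring_nf
    have := hasSum_int_inv_sq'
    rw [← he] at this
    exact (Equiv.hasSum_iff (Equiv.subLeft n)).mp this
  have hWsummable : Summable W := hWsum.summable
  have hW4 : ∑' m, W m ≤ 4 := by
    rw [hWsum.tsum_eq]
    nlinarith [Real.pi_lt_d2, Real.pi_gt_three]
  -- |b m| ≤ 1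
  have hb1 : ∀ m, |b m| ≤ 1 := by
    intro m
    have hle : |b m| ^ p m ≤ 1 :=
      le_trans (Summable.le_tsum hbsum m (fun i _ => rpow_nonneg (abs_nonneg _) _)) hbmod
    by_contra h
    push_neg at h
    have : 1 < |b m| ^ p m :=
      (Real.one_lt_rpow_iff_of_pos (lt_trans zero_lt_one h)).mpr
        (Or.inl ⟨h, lt_of_lt_of_le zero_lt_one (hp1 m)⟩)
    linarith
  -- B ≤ |b|^p termwise
  have hBle : ∀ m, B m ≤ |b m| ^ p m := by
    intro m
    by_cases h : m = n
    · simp [hB, h]; positivity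
    · simp only [hB, if_neg h]
      exact div_le_self (rpow_nonneg (abs_nonneg _) _) (hd1 m h)
  have hBsum : Summable B := hbsum.of_nonneg_of_le hB0 hBle
  have hT1 : ∑' m, B m ≤ 1 := le_trans (Summable.tsum_le_tsum hBle hBsum hbsum) hbmod
  have hT0 : 0 ≤ ∑' m, B m := tsum_nonneg hB0
  -- key estimate
  have key : Summable A ∧ ∑' m, A m ≤ 4 * (∑' m, B m) ^ (1 / pbar) := by
    rcases eq_or_lt_of_le hpbar1 with hpe | hplt
    · -- pbar = 1
      have hAB : A = B := by
        funext m
        by_cases h : m = n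
        · simp [hA, hB, h]
        · have hpm : p m = 1 := le_antisymm (hpe ▸ hpbar m) (hp1 m)
          simp [hA, hB, h, hpm]
      rw [hAB, ← hpe]
      simp only [div_one, Real.rpow_one]
      exact ⟨hBsum, by linarith⟩
    · -- 1 < pbar : Hölder
      set q : ℝ := pbar.conjExponent with hq
      have hpq : pbar.HolderConjugate q := Real.HolderConjugate.conjExponent hplt
      have hq1 : 1 ≤ q := hpq.symm.lt.le
      set F : ℤ → ℝ := fun m => (B m) ^ (1 / pbar) with hF
      set G : ℤ → ℝ := fun m => (W m) ^ (1 / q) with hG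
      have hF0 : ∀ m, 0 ≤ F m := fun m => rpow_nonneg (hB0 m) _
      have hG0 : ∀ m, 0 ≤ G m := fun m => rpow_nonneg (hW0 m) _
      have hFp : ∀ m, F m ^ pbar = B m := by
        intro m
        show (B m ^ (1 / pbar)) ^ pbar = B m
        rw [← Real.rpow_mul (hB0 m), one_div_mul_cancel hpbar0.ne', Real.rpow_one]
      have hGq : ∀ m, G m ^ q = W m := by
        intro m
        show (W m ^ (1 / q)) ^ q = W m
        rw [← Real.rpow_mul (hW0 m), one_div_mul_cancel hpq.symm.ne_zero, Real.rpow_one]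
      have hFsum : Summable fun m => F m ^ pbar := by
        simpa only [hFp] using hBsum
      have hGsum : Summable fun m => G m ^ q := by
        simpa only [hGq] using hWsummable
      obtain ⟨hFGsum, hFGle⟩ :=
        summable_and_inner_le_Lp_mul_Lq_tsum_of_nonneg hpq hF0 hG0 hFsum hGsum
      have hAFG : ∀ m, A m ≤ F m * G m := by
        intro m
        by_cases h : m = n
        · simp only [hA, hF, hG, hB, hW, if_pos h]
          positivity
        · set d : ℝ := |(n : ℝ) - m| ^ 2 with hd
          have hdpos : 0 < d := hd0 m h
          have hdd : d ^ (1 / pbar) * d ^ (1 / q) = d := by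
            rw [← Real.rpow_add hdpos,
              show 1 / pbar + 1 / q = 1 by
                rw [one_div, one_div]; exact hpq.inv_add_inv_eq_one,
              Real.rpow_one]
          have hFGeq : F m * G m = |b m| ^ (p m * (1 / pbar)) / d := by
            show (B m) ^ (1 / pbar) * (W m) ^ (1 / q) = _
            simp only [hB, hW, if_neg h, ← hd]
            rw [Real.div_rpow (rpow_nonneg (abs_nonneg _) _) hdpos.le,
              Real.div_rpow zero_le_one hdpos.le, Real.one_rpow,
              Real.rpow_mul (abs_nonneg _)]
            rw [div_mul_div_comm, mul_one, hdd]
          rw [hFGeq]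
          simp only [hA, if_neg h, ← hd]
          have hbb : |b m| ≤ |b m| ^ (p m * (1 / pbar)) := by
            rcases (abs_nonneg (b m)).eq_or_lt with hz | hz
            · rw [← hz]
              exact Real.rpow_nonneg le_rfl _
            · have h1 : p m * (1 / pbar) ≤ 1 := by
                rw [mul_one_div, div_le_one hpbar0]; exact hpbar m
              have := Real.rpow_le_rpow_of_exponent_ge hz (hb1 m) h1
              rwa [Real.rpow_one] at this
          gcongr
      refine ⟨Summable.of_nonneg_of_le hA0 hAFG hFGsum, ?_⟩
      calc ∑' m, A m ≤ ∑' m, F m * G m := Summable.tsum_le_tsum hAFG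
              (Summable.of_nonneg_of_le hA0 hAFG hFGsum) hFGsum
        _ ≤ (∑' m, F m ^ pbar) ^ (1/pbar) * (∑' m, G m ^ q) ^ (1/q) := hFGle
        _ = (∑' m, B m) ^ (1/pbar) * (∑' m, W m) ^ (1/q) := by
            simp only [hFp, hGq]
        _ ≤ (∑' m, B m) ^ (1/pbar) * 4 := by
            gcongr
            calc (∑' m, W m) ^ (1/q) ≤ (4:ℝ) ^ (1/q) :=
                  Real.rpow_le_rpow (tsum_nonneg hW0) hW4 (by positivity)
              _ ≤ (4:ℝ) ^ (1:ℝ) := Real.rpow_le_rpow_of_exponent_le (by norm_num)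
                  (by rw [div_le_one (by linarith)]; linarith)
              _ = 4 := Real.rpow_one 4
        _ = 4 * (∑' m, B m) ^ (1/pbar) := mul_comm _ _
  obtain ⟨hAsum, hAle⟩ := key
  have hS0 : 0 ≤ ∑' m, A m := tsum_nonneg hA0
  set S := ∑' m, A m
  set T := ∑' m, B m
  rcases eq_or_lt_of_le hT0 with hTz | hTpos
  · -- T = 0
    have hSz : S = 0 := by
      have : S ≤ 0 := by
        rw [← hTz] at hAle
        simpa [Real.zero_rpow, one_div, inv_ne_zero hpbar0.ne'] using hAle
      linarith
    rw [hSz, Real.zero_rpow (lt_of_lt_of_le zero_lt_one (hp1 n)).ne']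
    positivity
  · calc S ^ p n ≤ (4 * T ^ (1/pbar)) ^ p n :=
          Real.rpow_le_rpow hS0 hAle (by linarith [hp1 n])
      _ = 4 ^ p n * (T ^ (1/pbar)) ^ p n :=
          Real.mul_rpow (by norm_num) (rpow_nonneg hT0 _)
      _ = 4 ^ p n * T ^ (p n / pbar) := by
          congr 1
          rw [← Real.rpow_mul hT0, one_div, inv_mul_eq_div]
      _ ≤ 4 ^ pbar * T ^ (pmin / pbar) := by
          apply mul_le_mul
          · exact Real.rpow_le_rpow_of_exponent_le (by norm_num) (hpbar n)
          · exact Real.rpow_le_rpow_of_exponent_ge hTpos hT1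
              ((div_le_div_iff_of_pos_right hpbar0).mpr (hpmin n))
          · positivity
          · positivity
end

section
/- Let $(p_m)$ satisfy $1 \le p_m \le \bar{p} < \infty$ and let $(b_m)$ satisfy $\sum_m |b_m|^{p_m} \le 1$. Then there is a constant $C = C(\bar{p})$, independent of $k_0$ and $n_0$, such that for all $k_0 \in \mathbb{Z}$ and $n_0 \in \mathbb{N}$, $\sum_{|n - k_0| \le n_0 + 1} \sum_{m \neq n} \frac{|b_m|^{p_m}}{|n - m|^2} \le C$. -/
theorem uniform_double_sum_bound
    (p : ℤ → ℝ) (pbar : ℝ)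
    (hp1 : ∀ m, 1 ≤ p m) (hpbar : ∀ m, p m ≤ pbar)
    (b : ℤ → ℝ) (hbsum : Summable fun m => |b m| ^ p m)
    (hbmod : ∑' m, |b m| ^ p m ≤ 1) :
    ∃ C : ℝ, 0 < C ∧ ∀ (k₀ : ℤ) (n₀ : ℕ),
      ∑ n ∈ Finset.Icc (k₀ - (n₀ + 1)) (k₀ + (n₀ + 1)),
        (∑' m : ℤ, if m = n then 0 else |b m| ^ p m / |(n : ℝ) - m| ^ 2) ≤ C := by
  classical
  set h : ℤ → ℝ := fun k => if k = 0 then 0 else 1 / |(k : ℝ)| ^ 2 with hh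
  have hnonneg : ∀ k, 0 ≤ h k := by
    intro k; by_cases hk : k = 0 <;> simp [h, hk] <;> positivity
  have hle1 : ∀ k, h k ≤ 1 := by
    intro k
    by_cases hk : k = 0
    · simp [h, hk]
    · simp only [h, hk, if_false]
      rw [div_le_one (by positivity)]
      have h1 : (1 : ℝ) ≤ |(k : ℝ)| := by
        rw [← Int.cast_abs]
        exact_mod_cast Int.one_le_abs hk
      nlinarith [abs_nonneg (k : ℝ)]
  have hsummable : Summable h := by
    have hs : Summable fun k : ℤ => 1 / (k : ℝ) ^ 2 :=
      Real.summable_one_div_int_pow.mpr one_lt_two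
    refine hs.of_nonneg_of_le hnonneg ?_
    intro k
    by_cases hk : k = 0
    · simp [h, hk]
    · simp [h, hk, sq_abs]
  set T := ∑' k, h k with hT
  have hT0 : 0 ≤ T := tsum_nonneg hnonneg
  have hb0 : ∀ m, 0 ≤ |b m| ^ p m := fun m => Real.rpow_nonneg (abs_nonneg _) _
  refine ⟨T + 1, by linarith, fun k₀ n₀ => ?_⟩
  set s := Finset.Icc (k₀ - ((n₀ : ℤ) + 1)) (k₀ + ((n₀ : ℤ) + 1)) with hs
  have key : ∀ (n m : ℤ),
      (if m = n then 0 else |b m| ^ p m / |(n : ℝ) - m| ^ 2)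
        = |b m| ^ p m * h (m - n) := by
    intro n m
    by_cases hmn : m = n
    · simp [h, hmn]
    · have : (m : ℤ) - n ≠ 0 := sub_ne_zero.mpr hmn
      simp only [hmn, if_false, h, this, if_false]
      rw [mul_one_div]
      congr 2
      push_cast
      rw [abs_sub_comm]
  have hsumm : ∀ n : ℤ, Summable fun m => |b m| ^ p m * h (m - n) := by
    intro n
    refine hbsum.of_nonneg_of_le (fun m => mul_nonneg (hb0 m) (hnonneg _)) ?_
    intro m
    calc |b m| ^ p m * h (m - n) ≤ |b m| ^ p m * 1 :=
          mul_le_mul_of_nonneg_left (hle1 _) (hb0 m)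
      _ = |b m| ^ p m := mul_one _
  have step1 : ∑ n ∈ s, (∑' m : ℤ, if m = n then 0 else |b m| ^ p m / |(n : ℝ) - m| ^ 2)
      = ∑' m : ℤ, ∑ n ∈ s, |b m| ^ p m * h (m - n) := by
    have : ∀ n ∈ s, (∑' m : ℤ, if m = n then 0 else |b m| ^ p m / |(n : ℝ) - m| ^ 2)
        = ∑' m : ℤ, |b m| ^ p m * h (m - n) := fun n _ => tsum_congr fun m => key n m
    rw [Finset.sum_congr rfl this, ← Summable.tsum_finsetSum (fun n _ => hsumm n)]
  rw [step1]
  have inner_bound : ∀ m : ℤ, ∑ n ∈ s, |b m| ^ p m * h (m - n) ≤ |b m| ^ p m * T := by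
    intro m
    rw [← Finset.mul_sum]
    refine mul_le_mul_of_nonneg_left ?_ (hb0 m)
    have : ∑ n ∈ s, h (m - n) = ∑ k ∈ s.image (fun n => m - n), h k := by
      rw [Finset.sum_image]
      intro x _ y _ hxy
      simp only at hxy
      omega
    rw [this]
    exact Summable.sum_le_tsum _ (fun k _ => hnonneg k) hsummable
  calc (∑' m : ℤ, ∑ n ∈ s, |b m| ^ p m * h (m - n))
      ≤ ∑' m : ℤ, |b m| ^ p m * T := by
        refine Summable.tsum_le_tsum inner_bound ?_ (hbsum.mul_right T)
        refine (hbsum.mul_right T).of_nonneg_of_le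
          (fun m => Finset.sum_nonneg fun n _ => mul_nonneg (hb0 m) (hnonneg _))
          inner_bound
    _ = (∑' m : ℤ, |b m| ^ p m) * T := by rw [tsum_mul_right]
    _ ≤ 1 * T := mul_le_mul_of_nonneg_right hbmod hT0
    _ = T := one_mul T
    _ ≤ T + 1 := by linarith
end
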